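/- arXiv:1412.6822 — 2 statements merged into one kernel-verified Lean document; each statement's English description precedes it below -/
import Mathlib

section
/- The reflection map ω ↦ ω̃ defined by ω̃(n) := ω(1−n) maps Ω_τ into itself, is a continuous involution of Ω_τ, and has no fixed point: ω̃ ≠ ω for every ω ∈ Ω_τ. -/
/-- The four-letter alphabet `A = {a, x, y, z}`. -/
inductive A : Type
  | a | x | y | z
  deriving DecidableEq, Repr

/-- The substitution `τ : a ↦ axa, x ↦ y, y ↦ z, z ↦ x`. -/
def tau : A → List A
  | A.a => [A.a, A.x, A.a]
  | A.x => [A.y]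
  | A.y => [A.z]
  | A.z => [A.x]

/-- The substitution `τ` extended to finite words by concatenation. -/
def tauW (w : List A) : List A := w.flatMap tau

/-- `pw n = τⁿ(a)`, a word of length `2^(n+1) - 1`. -/
def pw : ℕ → List A
  | 0 => [A.a]
  | n + 1 => tauW (pw n)

/-- The fixed point `η` of `τ`: the unique one-sided infinite word having every
`τⁿ(a)` as a prefix.  (Since `pw (n+1)` has length `2^(n+2) - 1 > n`, reading its
`n`-th letter is well defined and independent of the choice of a large enough iterate.) -/
def eta (n : ℕ) : A := (pw (n + 1)).getD n A.a

/-- `w` is a (finite) factor of `η`. -/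
def IsFactorEta (w : List A) : Prop :=
  ∃ i : ℕ, w = (List.range w.length).map (fun k => eta (i + k))

/-- `Ω_τ`: the set of two-sided sequences all of whose finite factors are factors of `η`. -/
def OmegaTau (ω : ℤ → A) : Prop :=
  ∀ (i : ℤ) (n : ℕ), IsFactorEta ((List.range n).map (fun k => ω (i + k)))

instance : TopologicalSpace A := ⊥
instance : DiscreteTopology A := ⟨rfl⟩

def sigA : A → A
  | A.a => A.x
  | A.x => A.y
  | A.y => A.z
  | A.z => A.x

def expandW (bs : List A) : List A := bs.flatMap (fun b => [sigA b, A.x])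

def rep : List A → List A
  | [] => [A.a]
  | b :: bs => A.a :: b :: rep bs

def cs : ℕ → List A
  | 0 => []
  | n + 1 => A.x :: expandW (cs n)

lemma tauW_cons (c : A) (w : List A) : tauW (c :: w) = tau c ++ tauW w := by
  simp [tauW]

lemma tauW_append (u v : List A) : tauW (u ++ v) = tauW u ++ tauW v := by
  simp [tauW]

lemma tauW_rep (bs : List A) (h : ∀ b ∈ bs, b ≠ A.a) :
    tauW (rep bs) = rep (A.x :: expandW bs) := by
  induction bs with
  | nil => rfl
  | cons b bs ih =>
    have hb := h b List.mem_cons_self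
    have ih' := ih (fun c hc => h c (List.mem_cons_of_mem _ hc))
    cases b <;> simp_all [rep, expandW, tauW_cons, tau, sigA, List.flatMap_cons, List.flatMap]

lemma expandW_ne_a (bs : List A) (b : A) (hb : b ∈ expandW bs) : b ≠ A.a := by
  simp only [expandW, List.mem_flatMap] at hb
  obtain ⟨c, -, hc⟩ := hb
  simp only [List.mem_cons, List.mem_singleton, List.not_mem_nil, or_false] at hc
  rcases hc with rfl | rfl
  · cases c <;> simp [sigA]
  · simp

lemma cs_ne_a : ∀ n, ∀ b ∈ cs n, b ≠ A.a
  | 0 => by simp [cs]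
  | n + 1 => by
    intro b hb
    rcases List.mem_cons.mp hb with h | h
    · simp [h]
    · exact expandW_ne_a _ _ h

lemma pw_rep : ∀ n, pw n = rep (cs n)
  | 0 => rfl
  | n + 1 => by
    rw [pw, pw_rep n, tauW_rep _ (cs_ne_a n)]; rfl

lemma rep_getD_even : ∀ (bs : List A) (k : ℕ), (rep bs).getD (2 * k) A.a = A.a
  | [], 0 => rfl
  | [], k + 1 => by simp [rep, List.getD]
  | b :: bs, 0 => rfl
  | b :: bs, k + 1 => by
    have : 2 * (k + 1) = (2 * k) + 1 + 1 := by ring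
    rw [this]
    show (rep bs).getD (2 * k) A.a = A.a
    exact rep_getD_even bs k

lemma rep_getD_odd : ∀ (bs : List A) (k : ℕ) (d : A), (rep bs).getD (2 * k + 1) d = bs.getD k d
  | [], k, d => by simp [rep, List.getD]
  | b :: bs, 0, d => rfl
  | b :: bs, k + 1, d => by
    have : 2 * (k + 1) + 1 = (2 * k + 1) + 1 + 1 := by ring
    rw [this]
    show (rep bs).getD (2 * k + 1) d = _
    rw [rep_getD_odd bs k d]
    rfl

lemma length_rep : ∀ bs : List A, (rep bs).length = 2 * bs.length + 1
  | [] => rfl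
  | b :: bs => by simp [rep, length_rep bs]; ring

lemma length_expandW (bs : List A) : (expandW bs).length = 2 * bs.length := by
  induction bs with
  | nil => rfl
  | cons b bs ih => simp [expandW, List.flatMap_cons] at ih ⊢; omega

lemma length_cs_ge : ∀ n, n ≤ (cs n).length
  | 0 => Nat.zero_le _
  | n + 1 => by
    have := length_cs_ge n
    simp [cs, length_expandW]
    omega

lemma length_pw (n : ℕ) : (pw n).length = 2 * (cs n).length + 1 := by
  rw [pw_rep, length_rep]

lemma length_pw_ge (n : ℕ) : 2 * n + 1 ≤ (pw n).length := by
  have := length_cs_ge n; rw [length_pw]; omega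

lemma eta_even (k : ℕ) : eta (2 * k) = A.a := by
  rw [eta, pw_rep, rep_getD_even]

lemma eta_odd_ne (k : ℕ) : eta (2 * k + 1) ≠ A.a := by
  rw [eta, pw_rep, rep_getD_odd]
  have hk : k < (cs (2 * k + 1 + 1)).length := by
    have := length_cs_ge (2 * k + 1 + 1); omega
  rw [List.getD_eq_getElem _ _ hk]
  exact cs_ne_a _ _ (List.getElem_mem hk)

lemma eta_ne_succ (i : ℕ) : eta i ≠ eta (i + 1) := by
  rcases Nat.even_or_odd i with ⟨k, hk⟩ | ⟨k, hk⟩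
  · subst hk
    rw [show k + k = 2 * k by ring, eta_even]
    exact fun h => eta_odd_ne k h.symm
  · subst hk
    rw [show 2 * k + 1 + 1 = 2 * (k + 1) by ring, eta_even]
    exact eta_odd_ne k

lemma tau_palindrome (c : A) : (tau c).reverse = tau c := by cases c <;> rfl

lemma tauW_reverse (w : List A) : (tauW w).reverse = tauW w.reverse := by
  induction w with
  | nil => rfl
  | cons c w ih =>
    rw [tauW_cons, List.reverse_append, ih, List.reverse_cons, tauW_append]
    simp [tauW, tau_palindrome]

lemma pw_palindrome : ∀ n, (pw n).reverse = pw n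
  | 0 => rfl
  | n + 1 => by rw [pw, tauW_reverse, pw_palindrome n]

lemma pw_prefix_succ (n : ℕ) : pw n <+: pw (n + 1) := by
  induction n with
  | zero => exact ⟨[A.x, A.a], rfl⟩
  | succ n ih =>
    obtain ⟨t, ht⟩ := ih
    exact ⟨tauW t, by rw [pw, pw, ← ht, tauW_append]⟩

lemma pw_prefix {m n : ℕ} (h : m ≤ n) : pw m <+: pw n := by
  induction n with
  | zero => rw [Nat.le_zero.mp h]
  | succ n ih =>
    rcases Nat.lt_or_ge m (n + 1) with h' | h'
    · exact (ih (Nat.lt_succ_iff.mp h')).trans (pw_prefix_succ n)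
    · rw [Nat.le_antisymm h h']

lemma eta_eq_pw {m n : ℕ} (h : n < (pw m).length) : eta n = (pw m)[n] := by
  rcases Nat.le_total (n + 1) m with hm | hm
  · have hp := pw_prefix hm
    have hn : n < (pw (n + 1)).length := by have := length_pw_ge (n + 1); omega
    rw [eta, List.getD_eq_getElem _ _ hn]
    exact hp.getElem hn
  · have hp := pw_prefix hm
    rw [eta, List.getD_eq_getElem _ _ (by have := hp.length_le; omega)]
    exact (hp.getElem h).symm

lemma rev_factor {v : List A} (h : IsFactorEta v) : IsFactorEta v.reverse := by
  obtain ⟨i, hi⟩ := h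
  have hL : i + v.length ≤ (pw (i + v.length)).length := by
    have := length_pw_ge (i + v.length); omega
  refine ⟨(pw (i + v.length)).length - i - v.length, ?_⟩
  apply List.ext_getElem (by simp)
  intro k h1 h2
  simp only [List.getElem_map, List.getElem_range, List.length_reverse] at h2 ⊢
  rw [List.getElem_reverse]
  have hk : k < v.length := by simpa using h1
  have hv : v[v.length - 1 - k]'(by omega) = eta (i + (v.length - 1 - k)) := by
    rw [List.getElem_of_eq hi]
    simp
  rw [hv]
  have h3 : i + (v.length - 1 - k) < (pw (i + v.length)).length := by omega
  have h4 : (pw (i + v.length)).length - i - v.length + k < (pw (i + v.length)).length := by omega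
  rw [eta_eq_pw h3, eta_eq_pw h4]
  have hpal := pw_palindrome (i + v.length)
  calc (pw (i + v.length))[i + (v.length - 1 - k)]
      = (pw (i + v.length)).reverse[(pw (i + v.length)).length - 1 - (i + (v.length - 1 - k))]'(by simp; omega) := by
        rw [List.getElem_reverse]; congr 1; omega
    _ = (pw (i + v.length))[(pw (i + v.length)).length - i - v.length + k] := by
        simp only [hpal]; congr 1; omega

lemma flatMap_sing (l : List ℕ) (f : ℕ → ℤ) : l.flatMap (fun a => [f a]) = l.map f := by
  induction l with
  | nil => rfl
  | cons b l ih => simp [List.flatMap_cons, ih]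

lemma coe_range (n : ℕ) :
    ((List.range n).flatMap fun a : ℕ => [(a : ℤ)]) = (List.range n).map (fun a : ℕ => (a : ℤ)) :=
  flatMap_sing _ _

lemma coe_word (f : ℤ → A) (i : ℤ) (n : ℕ) :
    (List.range n).map (fun k => f (i + k)) = (List.range n).map (fun k : ℕ => f (i + (k : ℤ))) := by
  have h : (List.map (fun k : ℤ => f (i + k)) ((List.range n).flatMap fun a : ℕ => [(a : ℤ)]))
      = (List.range n).map (fun k : ℕ => f (i + (k : ℤ))) := by
    rw [coe_range, List.map_map]
    rfl
  exact h

lemma part1 : ∀ ω : ℤ → A, OmegaTau ω → OmegaTau (fun n => ω (1 - n)) := by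
  intro ω hω i n
  have hfac := hω (2 - i - n) n
  rw [coe_word ω (2 - i - n) n] at hfac
  have hg := coe_word (fun m => ω (1 - m)) i n
  rw [hg]
  have key : ((List.range n).map fun k : ℕ => (fun m => ω (1 - m)) (i + (k : ℤ))) =
      ((List.range n).map (fun k : ℕ => ω ((2 - i - n) + (k : ℤ)))).reverse := by
    apply List.ext_getElem (by simp)
    intro k h1 h2
    have hk : k < n := by simpa using h1
    rw [List.getElem_reverse]
    simp only [List.length_map, List.length_range, List.getElem_map, List.getElem_range]
    show ω (1 - (i + (k : ℤ))) = _
    congr 1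
    omega
  rw [key]
  exact rev_factor hfac

lemma part3 : ∀ ω : ℤ → A, OmegaTau ω → (fun n => ω (1 - n)) ≠ ω := by
  intro ω hω h
  have h01 : ω 0 = ω 1 := by
    have := congrFun h 1
    simpa using this
  have hfac := hω 0 2
  rw [coe_word ω 0 2] at hfac
  obtain ⟨i, hi⟩ := hfac
  rw [List.length_map, List.length_range] at hi
  rw [show List.range 2 = [0, 1] by decide] at hi
  simp only [List.map_cons, List.map_nil, List.cons.injEq, and_true] at hi
  obtain ⟨e0, e1⟩ := hi
  have e0' : ω 0 = eta i := by simpa using e0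
  have e1' : ω 1 = eta (i + 1) := by simpa using e1
  exact eta_ne_succ i (by rw [← e0', ← e1']; exact h01)

/-- The reflection `ω ↦ ω̃`, `ω̃(n) = ω(1-n)`, maps `Ω_τ` into itself, induces a
continuous involution of `Ω_τ`, and has no fixed point. -/
theorem reflection_involution_no_fixed_point :
    (∀ ω : ℤ → A, OmegaTau ω → OmegaTau (fun n => ω (1 - n))) ∧
    (∃ R : {ω : ℤ → A // OmegaTau ω} → {ω : ℤ → A // OmegaTau ω},
      (∀ ω : {ω : ℤ → A // OmegaTau ω}, (R ω).1 = fun n => ω.1 (1 - n)) ∧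
      Continuous R ∧ R ∘ R = id) ∧
    (∀ ω : ℤ → A, OmegaTau ω → (fun n => ω (1 - n)) ≠ ω) := by
  refine ⟨part1, ⟨fun ω => ⟨fun n => ω.1 (1 - n), part1 ω.1 ω.2⟩, fun ω => rfl, ?_, ?_⟩, part3⟩
  · apply Continuous.subtype_mk
    exact continuous_pi fun n => (continuous_apply (1 - n)).comp continuous_subtype_val
  · funext ω
    apply Subtype.ext
    funext n
    simp
end

section
/- Let n ≥ 1 and s ∈ {x,y,z}. If the word p⁽ⁿ⁾ s p⁽ⁿ⁾ (of length 2ⁿ⁺²−1) occurs in η starting at position l (0-indexed), i.e., η(l)η(l+1)⋯η(l+2ⁿ⁺²−2) = p⁽ⁿ⁾ s p⁽ⁿ⁾, then 2ⁿ⁺¹ divides l. In other words, every occurrence of p⁽ⁿ⁾ s p⁽ⁿ⁾ in η is aligned with the blocks p⁽ⁿ⁾ of the n-decomposition η = p⁽ⁿ⁾ r₁⁽ⁿ⁾ p⁽ⁿ⁾ r₂⁽ⁿ⁾ p⁽ⁿ⁾ ⋯. -/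
/-- cyclic coding of 2-adic valuations into letters -/
def code (v : ℕ) : A := if v % 3 = 1 then A.x else if v % 3 = 2 then A.y else A.z

abbrev v2 (t : ℕ) : ℕ := padicValNat 2 t

/-- the closed formula for η -/
def F (m : ℕ) : A := if m % 2 = 0 then A.a else code (v2 (m + 1))

lemma code_ne_a (v : ℕ) : code v ≠ A.a := by
  unfold code; split <;> [skip; split] <;> simp

lemma code_inj {p q : ℕ} (h : code p = code q) : p % 3 = q % 3 := by
  have hp : p % 3 = 0 ∨ p % 3 = 1 ∨ p % 3 = 2 := by omega
  have hq : q % 3 = 0 ∨ q % 3 = 1 ∨ q % 3 = 2 := by omega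
  unfold code at h
  rcases hp with hp | hp | hp <;> rcases hq with hq | hq | hq <;>
    simp [hp, hq] at h ⊢

lemma tau_code (k : ℕ) : tau (code k) = [code (k + 1)] := by
  have hp : k % 3 = 0 ∨ k % 3 = 1 ∨ k % 3 = 2 := by omega
  rcases hp with hp | hp | hp <;>
    · have h1 : (k+1) % 3 = (k % 3 + 1) % 3 := by omega
      simp [code, hp, h1, tau]

lemma pw_succ (n : ℕ) : pw (n + 1) = pw n ++ [code (n + 1)] ++ pw n := by
  induction n with
  | zero => decide
  | succ n ih =>
    show tauW (pw (n+1)) = _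
    rw [ih]
    rw [tauW_append, tauW_append]
    show pw (n+1) ++ tauW [code (n+1)] ++ pw (n+1) = _
    have : tauW [code (n+1)] = tau (code (n+1)) := by simp [tauW]
    rw [this, tau_code, ← ih]

lemma pw_length (n : ℕ) : (pw n).length = 2 ^ (n + 1) - 1 := by
  induction n with
  | zero => rfl
  | succ n ih =>
    rw [pw_succ, List.length_append, List.length_append, ih]
    have : 1 ≤ 2 ^ (n+1) := Nat.one_le_two_pow
    simp only [List.length_cons, List.length_nil]
    rw [pow_succ]
    omega

lemma v2_two_pow (k : ℕ) : v2 (2 ^ k) = k := padicValNat.prime_pow k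

lemma v2_odd {t : ℕ} (h : t % 2 = 1) : v2 t = 0 :=
  padicValNat.eq_zero_of_not_dvd (by omega)

lemma v2_pow_mul (k : ℕ) {t : ℕ} (ht : t ≠ 0) : v2 (2 ^ k * t) = k + v2 t := by
  show padicValNat 2 (2 ^ k * t) = k + padicValNat 2 t
  rw [padicValNat.mul (p := 2) (pow_ne_zero _ two_ne_zero) ht,
    padicValNat.prime_pow (p := 2) k]

lemma dvd_of_le_v2 {t c : ℕ} (h : c ≤ v2 t) : 2 ^ c ∣ t :=
  dvd_trans (pow_dvd_pow 2 h) pow_padicValNat_dvd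

lemma v2_add_pow {t k : ℕ} (h0 : 0 < t) (hk : t < 2 ^ k) : v2 (t + 2 ^ k) = v2 t := by
  set v := v2 t with hv
  obtain ⟨o, ho⟩ : 2 ^ v ∣ t := pow_padicValNat_dvd
  have hnd : ¬ 2 ^ (v + 1) ∣ t := pow_succ_padicValNat_not_dvd h0.ne'
  have hodd : o % 2 = 1 := by
    rcases Nat.even_or_odd o with ⟨o', rfl⟩ | h2
    · exact absurd ⟨o', by rw [ho]; ring⟩ hnd
    · exact Nat.odd_iff.mp h2
  have hvk : v < k := by
    have h1 : 2 ^ v ≤ t := Nat.le_of_dvd h0 (ho ▸ Dvd.intro o rfl)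
    exact (Nat.pow_lt_pow_iff_right one_lt_two).mp (lt_of_le_of_lt h1 hk)
  have hsplit : t + 2 ^ k = 2 ^ v * (o + 2 ^ (k - v)) := by
    rw [Nat.mul_add, ← ho, ← pow_add]
    congr 2
    omega
  have hoo : (o + 2 ^ (k - v)) % 2 = 1 := by
    have : 2 ^ (k - v) % 2 = 0 := by
      have h3 : k - v = (k - v - 1) + 1 := by omega
      rw [h3, pow_succ]; omega
    omega
  rw [hsplit, v2_pow_mul _ (by omega), v2_odd hoo]
  omega

lemma F_center (k : ℕ) : F (2 ^ (k + 1) - 1) = code (k + 1) := by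
  have h2 : 2 ≤ 2 ^ (k + 1) := by
    have := Nat.one_lt_two_pow_iff (n := k + 1) |>.mpr (by omega)
    omega
  have he : 2 ^ (k + 1) % 2 = 0 := by rw [pow_succ]; omega
  have hm : (2 ^ (k + 1) - 1) % 2 = 1 := by omega
  have hs : 2 ^ (k + 1) - 1 + 1 = 2 ^ (k + 1) := by omega
  unfold F
  rw [if_neg (by omega), hs, v2_two_pow]

lemma F_per {k j : ℕ} (hj : j < 2 ^ (k + 1) - 1) : F (2 ^ (k + 1) + j) = F j := by
  have he : 2 ^ (k + 1) % 2 = 0 := by rw [pow_succ]; omega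
  have hpar : (2 ^ (k + 1) + j) % 2 = j % 2 := by omega
  unfold F
  rw [hpar]
  by_cases hj2 : j % 2 = 0
  · simp [hj2]
  · rw [if_neg hj2, if_neg hj2]
    have : 2 ^ (k + 1) + j + 1 = (j + 1) + 2 ^ (k + 1) := by ring
    rw [this, v2_add_pow (by omega) (by omega)]

lemma pw_getD (n : ℕ) : ∀ j, j < 2 ^ (n + 1) - 1 → (pw n).getD j A.a = F j := by
  induction n with
  | zero =>
    intro j hj
    have : j = 0 := by omega
    subst this
    simp [pw, F]
  | succ n ih =>
    intro j hj
    have hL : (pw n).length = 2 ^ (n + 1) - 1 := pw_length n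
    have hone : 1 ≤ 2 ^ (n + 1) := Nat.one_le_two_pow
    have hlen2 : (pw n ++ [code (n + 1)]).length = 2 ^ (n + 1) := by
      rw [List.length_append, hL]
      simp only [List.length_cons, List.length_nil]
      omega
    rw [pw_succ]
    rcases lt_trichotomy j (2 ^ (n + 1) - 1) with h1 | h1 | h1
    · rw [List.getD_append _ _ _ _ (by omega)]
      rw [List.getD_append _ _ _ _ (by omega)]
      exact ih j h1
    · subst h1
      rw [List.getD_append _ _ _ _ (by omega)]
      rw [List.getD_append_right _ _ _ _ (by omega)]
      rw [hL, Nat.sub_self]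
      simp [F_center]
    · rw [List.getD_append_right _ _ _ _ (by omega)]
      rw [hlen2]
      have hjlt : j - 2 ^ (n + 1) < 2 ^ (n + 1) - 1 := by
        rw [pow_succ] at hj; omega
      rw [ih _ hjlt]
      have heq : j = 2 ^ (n + 1) + (j - 2 ^ (n + 1)) := by omega
      conv_rhs => rw [heq]
      exact (F_per hjlt).symm

lemma eta_eq_F (m : ℕ) : eta m = F m := by
  have h1 : m < 2 ^ m := Nat.lt_two_pow_self (n := m)
  have h2 : 2 ^ m < 2 ^ (m + 2) := Nat.pow_lt_pow_right one_lt_two (by omega)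
  exact pw_getD (m + 1) m (by omega)

lemma eta_even_s9 {m : ℕ} (h : eta m = A.a) : m % 2 = 0 := by
  rw [eta_eq_F] at h
  unfold F at h
  by_contra hc
  rw [if_neg hc] at h
  exact code_ne_a _ h

lemma eta_odd_code {m : ℕ} (h : m % 2 = 1) : eta m = code (v2 (m + 1)) := by
  rw [eta_eq_F]
  unfold F
  rw [if_neg (by omega)]

lemma main_aux : ∀ n, 1 ≤ n → ∀ l : ℕ,
    (∀ j, j < 2 ^ (n + 1) - 1 → eta (l + j) = F j) →
    (∀ j, j < 2 ^ (n + 1) - 1 → eta (l + 2 ^ (n + 1) + j) = F j) →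
    2 ^ (n + 1) ∣ l := by
  intro n hn
  induction n, hn using Nat.le_induction with
  | base =>
    intro l H1 H3
    have hfour : (2:ℕ) ^ (1 + 1) = 4 := by norm_num
    rw [hfour] at H1 H3 ⊢
    have hF0 : F 0 = A.a := by simp [F]
    have hF1 : F 1 = A.x := by
      unfold F
      rw [if_neg (by omega)]
      show code (v2 (2 ^ 1)) = A.x
      rw [v2_two_pow]
      decide
    have h0 := H1 0 (by omega)
    rw [hF0, Nat.add_zero] at h0
    have hl2 : l % 2 = 0 := eta_even_s9 h0
    have hcx : A.x = code 1 := by decide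
    have h1 := H1 1 (by omega)
    rw [hF1, hcx] at h1
    have h5 := H3 1 (by omega)
    rw [hF1, hcx] at h5
    rw [eta_odd_code (m := l + 1) (by omega)] at h1
    have hx1 := code_inj h1
    rw [eta_odd_code (m := l + 4 + 1) (by omega)] at h5
    have hx5 := code_inj h5
    by_contra hndvd
    have h4 : (2:ℕ) ^ 2 = 4 := by norm_num
    have e2 : l + 1 + 1 = 2 ^ 2 * (l / 4 + 1) := by omega
    rw [e2, v2_pow_mul _ (by omega)] at hx1
    have hge : 2 ≤ v2 (l / 4 + 1) := by omega
    obtain ⟨u, hu⟩ : 2 ^ 2 ∣ l / 4 + 1 := dvd_of_le_v2 hge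
    have e3 : l + 4 + 1 + 1 = 2 ^ 2 * (4 * u + 1) := by omega
    rw [e3, v2_pow_mul _ (by omega), v2_odd (by omega)] at hx5
    omega
  | succ n hn ih =>
    intro l H1 H3
    have hone : (1:ℕ) ≤ 2 ^ (n + 1) := Nat.one_le_two_pow
    have h22 : (2:ℕ) ^ (n + 1 + 1) = 2 ^ (n + 1) * 2 := pow_succ 2 (n + 1)
    have h21 : (2:ℕ) ^ (n + 1) = 2 ^ n * 2 := pow_succ 2 n
    have hdvd : 2 ^ (n + 1) ∣ l := by
      apply ih l
      · intro j hj
        exact H1 j (by omega)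
      · intro j hj
        have h := H1 (2 ^ (n + 1) + j) (by omega)
        rw [F_per hj] at h
        rw [← Nat.add_assoc] at h
        exact h
    obtain ⟨m, hm⟩ := hdvd
    rcases Nat.even_or_odd m with ⟨m', rfl⟩ | hodd
    · exact ⟨m', by rw [hm, pow_succ]; ring⟩
    · exfalso
      have hmo : m % 2 = 1 := Nat.odd_iff.mp hodd
      have hl2 : l % 2 = 0 := by
        have hl : l = 2 * (2 ^ n * m) := by rw [hm, h21]; ring
        omega
      -- center of the left copy of pw (n+1)
      have hA := H1 (2 ^ (n + 1) - 1) (by omega)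
      rw [F_center n] at hA
      rw [eta_odd_code (m := l + (2 ^ (n + 1) - 1)) (by omega)] at hA
      have hr1 : 2 ^ (n + 1) * (m + 1) = 2 ^ (n + 1) * m + 2 ^ (n + 1) := by ring
      have hplus : l + (2 ^ (n + 1) - 1) + 1 = 2 ^ (n + 1) * (m + 1) := by omega
      rw [hplus, v2_pow_mul _ (by omega)] at hA
      have h3a := code_inj hA
      have hge1 : 1 ≤ v2 (m + 1) := by
        have h2 : m + 1 = 2 ^ 1 * ((m + 1) / 2) := by omega
        rw [h2, v2_pow_mul _ (by omega)]
        omega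
      have hge3 : 3 ≤ v2 (m + 1) := by omega
      obtain ⟨u, hu⟩ : 2 ^ 3 ∣ m + 1 := dvd_of_le_v2 hge3
      -- center of the right copy of pw (n+1)
      have hB := H3 (2 ^ (n + 1) - 1) (by omega)
      rw [F_center n] at hB
      rw [eta_odd_code (m := l + 2 ^ (n + 1 + 1) + (2 ^ (n + 1) - 1)) (by omega)] at hB
      have hr2 : 2 ^ (n + 1) * (m + 3) = 2 ^ (n + 1) * m + 2 ^ (n + 1) * 2 + 2 ^ (n + 1) := by
        ring
      have hplus2 : l + 2 ^ (n + 1 + 1) + (2 ^ (n + 1) - 1) + 1 = 2 ^ (n + 1) * (m + 3) := by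
        omega
      rw [hplus2, v2_pow_mul _ (by omega)] at hB
      have h3b := code_inj hB
      have hv1 : v2 (m + 3) = 1 := by
        have h2 : m + 3 = 2 ^ 1 * (4 * u + 1) := by omega
        rw [h2, v2_pow_mul _ (by omega), v2_odd (by omega)]
      omega

/-- **Alignment**: for `n ≥ 1` and `s ∈ {x,y,z}`, every occurrence of
`p⁽ⁿ⁾ s p⁽ⁿ⁾` in `η` (0-indexed, starting at position `l`) satisfies
`2^(n+1) ∣ l`, i.e. it is aligned with the blocks of the `n`-decomposition. -/
theorem occurrence_alignment (n : ℕ) (hn : 1 ≤ n) (s : A)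
    (hs : s ∈ ({A.x, A.y, A.z} : Set A)) (l : ℕ)
    (hocc : (List.range (pw n ++ [s] ++ pw n).length).map (fun j => eta (l + j)) =
      pw n ++ [s] ++ pw n) :
    2 ^ (n + 1) ∣ l := by
  have hL : (pw n).length = 2 ^ (n + 1) - 1 := pw_length n
  have hone : (1:ℕ) ≤ 2 ^ (n + 1) := Nat.one_le_two_pow
  have hWlen : (pw n ++ [s] ++ pw n).length = 2 ^ (n + 1) - 1 + 1 + (2 ^ (n + 1) - 1) := by
    simp [hL]
    omega
  have hlen2 : (pw n ++ [s]).length = 2 ^ (n + 1) := by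
    rw [List.length_append, hL]
    simp only [List.length_cons, List.length_nil]
    omega
  have H : ∀ j, j < 2 ^ (n + 1) - 1 + 1 + (2 ^ (n + 1) - 1) →
      eta (l + j) = (pw n ++ [s] ++ pw n).getD j A.a := by
    intro j hj
    have h1 : ((List.range (pw n ++ [s] ++ pw n).length).map
        (fun j => eta (l + j))).getD j A.a = (pw n ++ [s] ++ pw n).getD j A.a := by
      rw [hocc]
    rw [← h1]
    rw [List.getD_eq_getElem _ _ (by rw [List.length_map, List.length_range, hWlen]; omega)]
    simp
  apply main_aux n hn l
  · intro j hj
    have h := H j (by omega)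
    rw [List.getD_append _ _ _ _ (by rw [hlen2]; omega)] at h
    rw [List.getD_append _ _ _ _ (by omega)] at h
    rw [pw_getD n j hj] at h
    exact h
  · intro j hj
    have h := H (2 ^ (n + 1) + j) (by omega)
    rw [List.getD_append_right _ _ _ _ (by omega)] at h
    rw [hlen2] at h
    have he : 2 ^ (n + 1) + j - 2 ^ (n + 1) = j := by omega
    rw [he, pw_getD n j hj, ← Nat.add_assoc] at h
    exact h
end
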